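/- Let X be a tame EM-simplicial set, x ∈ X_n, and φ : [m] → [n] a map in the simplex category Δ. Then supp_k(φ^*x) ⊆ supp_{φ(k)}(x) for all 0 ≤ k ≤ m. -/

import Mathlib

noncomputable section

/- ## Basic setup: the monoid `M = Inj(ω,ω)`, supports, tameness, universal subgroups -/

open CategoryTheory Opposite Simplicial MonoidalCategory

set_option linter.unusedVariables false

/-- The monoid `𝕄 = Inj(ω,ω)` of injective self-maps of `ω = ℕ`, under composition. -/
noncomputable def Mi : Type := {f : ℕ → ℕ // Function.Injective f}

noncomputable instance : Monoid Mi where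
  one := ⟨id, fun _ _ h => h⟩
  mul u v := ⟨u.1 ∘ v.1, u.2.comp v.2⟩
  mul_assoc u v w := rfl
  one_mul u := rfl
  mul_one u := rfl

@[simp] lemma Mi.one_apply (n : ℕ) : (1 : Mi).1 n = n := rfl
@[simp] lemma Mi.mul_apply (u v : Mi) (n : ℕ) : (u * v).1 n = u.1 (v.1 n) := rfl

/-- An element `x` of an `𝕄`-"set" (given by a raw action `act`) is supported on `A ⊆ ω` if
every `u ∈ 𝕄` fixing `A` pointwise fixes `x`. -/
noncomputable def MSuppOn {X : Type*} (act : Mi → X → X) (A : Set ℕ) (x : X) : Prop :=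
  ∀ u : Mi, (∀ a ∈ A, u.1 a = a) → act u x = x

/-- Finitely supported elements. -/
noncomputable def MFinSupp {X : Type*} (act : Mi → X → X) (x : X) : Prop :=
  ∃ A : Set ℕ, A.Finite ∧ MSuppOn act A x

/-- The support of an element: the intersection of all finite sets on which it is supported. -/
noncomputable def MSupp {X : Type*} (act : Mi → X → X) (x : X) : Set ℕ :=
  ⋂₀ setOf (fun A : Set ℕ => A.Finite ∧ MSuppOn act A x)

/-- A (raw) `𝕄`-action is tame if every element is finitely supported. -/
noncomputable def MTame {X : Type*} (act : Mi → X → X) : Prop := ∀ x : X, MFinSupp act x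

/-- A submonoid `H ⊆ 𝕄` is a *universal subgroup* if it is a finite subgroup and `ω`, with the
tautological `H`-action, is a complete `H`-set universe, i.e. every finite `H`-set embeds
`H`-equivariantly into `ω`. -/
noncomputable def IsUniversal (H : Submonoid Mi) : Prop :=
  (∀ h ∈ H, ∃ h' ∈ H, h * h' = 1 ∧ h' * h = 1) ∧ Finite H ∧
    ∀ (n : ℕ) (ρ : ↥H →* Equiv.Perm (Fin n)), ∃ e : Fin n → ℕ,
      Function.Injective e ∧ ∀ (h : ↥H) (i : Fin n), e (ρ h i) = (h : Mi).1 (e i)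

/- ## `E𝕄`-simplicial sets: simplicial sets with an action of the simplicial monoid `E𝕄`,
  where `(E𝕄)_n = 𝕄^{n+1}`. -/

/-- An `E𝕄`-simplicial set: a simplicial set `X` together with, levelwise, an action of
`𝕄^{n+1} = (E𝕄)_n` on `X_n`, compatible with the simplicial structure maps. -/
structure EMSSet : Type 1 where
  X : SSet.{0}
  act : ∀ o : SimplexCategoryᵒᵖ, (Fin (o.unop.len + 1) → Mi) → X.obj o → X.obj o
  act_one : ∀ o x, act o (fun _ => 1) x = x
  act_mul : ∀ o u v x, act o (fun i => u i * v i) x = act o u (act o v x)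
  act_map : ∀ {o o' : SimplexCategoryᵒᵖ} (f : o ⟶ o') (u : Fin (o.unop.len + 1) → Mi)
      (x : X.obj o), X.map f (act o u x) = act o' (fun i => u (f.unop.toOrderHom i)) (X.map f x)

namespace EMSSet

/-- A simplex `x ∈ X_n` is `k`-supported on `A` if every `u ∈ 𝕄` fixing `A` pointwise,
inserted in the `(k+1)`-st coordinate of `𝕄^{n+1}` (identities elsewhere), fixes `x`. -/
noncomputable def KSuppOn (E : EMSSet) {o : SimplexCategoryᵒᵖ} (k : Fin (o.unop.len + 1)) (A : Set ℕ)
    (x : E.X.obj o) : Prop :=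
  ∀ w : Mi, (∀ a ∈ A, w.1 a = a) → E.act o (fun i => if i = k then w else 1) x = x

/-- `x` is `k`-finitely supported. -/
noncomputable def KFinSupp (E : EMSSet) {o : SimplexCategoryᵒᵖ} (k : Fin (o.unop.len + 1))
    (x : E.X.obj o) : Prop :=
  ∃ A : Set ℕ, A.Finite ∧ E.KSuppOn k A x

/-- The `k`-th support of a simplex: the intersection of all finite sets on which it is
`k`-supported. -/
noncomputable def ksupp (E : EMSSet) {o : SimplexCategoryᵒᵖ} (k : Fin (o.unop.len + 1))
    (x : E.X.obj o) : Set ℕ :=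
  ⋂₀ setOf (fun A : Set ℕ => A.Finite ∧ E.KSuppOn k A x)

/-- `x` is supported on `A` if it is `k`-supported on `A` for all `k`. -/
noncomputable def SuppOn (E : EMSSet) {o : SimplexCategoryᵒᵖ} (A : Set ℕ) (x : E.X.obj o) : Prop :=
  ∀ k, E.KSuppOn k A x

/-- The support of a (finitely supported) simplex. -/
noncomputable def supp (E : EMSSet) {o : SimplexCategoryᵒᵖ} (x : E.X.obj o) : Set ℕ :=
  ⋃ k, E.ksupp k x

/-- An `E𝕄`-simplicial set is tame if every simplex is `k`-finitely supported for all `k`. -/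
noncomputable def Tame (E : EMSSet) : Prop :=
  ∀ (o : SimplexCategoryᵒᵖ) (x : E.X.obj o) (k : Fin (o.unop.len + 1)), E.KFinSupp k x

end EMSSet

/-- Morphisms of `E𝕄`-simplicial sets: `E𝕄`-equivariant simplicial maps. -/
@[ext] structure EMHom (E F : EMSSet) : Type where
  toHom : E.X ⟶ F.X
  equiv : ∀ (o : SimplexCategoryᵒᵖ) (u : Fin (o.unop.len + 1) → Mi) (x : E.X.obj o),
    toHom.app o (E.act o u x) = F.act o u (toHom.app o x)

namespace EMHom

noncomputable def id' (E : EMSSet) : EMHom E E :=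
  ⟨𝟙 E.X, fun _ _ _ => rfl⟩

noncomputable def comp {E F G : EMSSet} (f : EMHom E F) (g : EMHom F G) : EMHom E G :=
  ⟨f.toHom ≫ g.toHom, fun o u x => by
    have h1 := f.equiv o u x
    have h2 := g.equiv o u (f.toHom.app o x)
    show g.toHom.app o (f.toHom.app o _) = _
    rw [h1, h2]
    rfl⟩

end EMHom

noncomputable instance : Category EMSSet where
  Hom := EMHom
  id := EMHom.id'
  comp := EMHom.comp
  id_comp f := by apply EMHom.ext; simp [EMHom.comp, EMHom.id']
  comp_id f := by apply EMHom.ext; simp [EMHom.comp, EMHom.id']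
  assoc f g h := by apply EMHom.ext; simp [EMHom.comp]

/- ## STATEMENT 16:
For a tame `E𝕄`-simplicial set `X`, `x ∈ X_n` and `φ : [m] → [n]` in `Δ`,
`supp_k(φ^* x) ⊆ supp_{φ(k)}(x)` for all `0 ≤ k ≤ m`. -/

/-- Any injection, restricted to a finite set, extends to a finitary permutation of `ℕ`. -/
lemma exists_finitary_perm_ext (w : ℕ → ℕ) (hw : Function.Injective w) (D : Finset ℕ) :
    ∃ π : Equiv.Perm ℕ, (∀ d ∈ D, π d = w d) ∧ {n | π n ≠ n}.Finite := by
  classical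
  induction D using Finset.induction_on with
  | empty => exact ⟨1, by simp, by simp⟩
  | @insert a D ha ih =>
    obtain ⟨π', h1, h2⟩ := ih
    refine ⟨π' * Equiv.swap a (π'⁻¹ (w a)), ?_, ?_⟩
    · intro d hd
      rcases Finset.mem_insert.1 hd with rfl | hd
      · simp [Equiv.Perm.mul_apply]
      · have hda : d ≠ a := fun h => ha (h ▸ hd)
        have hdc : d ≠ π'⁻¹ (w a) := by
          intro h
          have : π' d = w a := by rw [h]; simp
          have : w d = w a := by rw [← h1 d hd]; exact this
          exact ha ((hw this) ▸ hd)
        rw [Equiv.Perm.mul_apply, Equiv.swap_apply_of_ne_of_ne hda hdc, h1 d hd]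
    · apply Set.Finite.subset (h2.union ((Set.finite_singleton (π'⁻¹ (w a))).insert a))
      intro n hn
      by_contra hc
      simp only [Set.mem_union, Set.mem_insert_iff, Set.mem_setOf_eq, Set.mem_singleton_iff,
        not_or] at hc
      obtain ⟨hfix, hna, hnc⟩ := hc
      apply hn
      rw [Equiv.Perm.mul_apply, Equiv.swap_apply_of_ne_of_ne hna hnc, not_not.1 hfix]

/-- Key lemma: if a finite set `A` `(φ k)`-supports `x`, then `A` `k`-supports `φ^* x`,
provided `φ^* x` is `k`-finitely supported. -/
lemma key_suppOn (E : EMSSet)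
    {o o' : SimplexCategoryᵒᵖ} (f : o ⟶ o') (x : E.X.obj o)
    (k : Fin (o'.unop.len + 1)) (A : Set ℕ) (hA : A.Finite)
    (hx : E.KSuppOn (f.unop.toOrderHom k) A x)
    (hfs : E.KFinSupp k (E.X.map f x)) :
    E.KSuppOn k A (E.X.map f x) := by
  classical
  intro w hwA
  set y := E.X.map f x with hy
  obtain ⟨B, hBfin, hB⟩ := hfs
  obtain ⟨π, hπ, hmoved⟩ := exists_finitary_perm_ext w.1 w.2 (hA.union hBfin).toFinset
  have hπD : ∀ d ∈ A ∪ B, π d = w.1 d := fun d hd =>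
    hπ d ((hA.union hBfin).mem_toFinset.2 hd)
  set πM : Mi := ⟨π, π.injective⟩ with hπMdef
  -- Step 1: `i_k(w) y = i_k(π) y`, since `π⁻¹ ∘ w` fixes the `k`-support `B` of `y`.
  have step1 : E.act o' (fun i => if i = k then w else 1) y
      = E.act o' (fun i => if i = k then πM else 1) y := by
    set v : Mi := ⟨π.symm ∘ w.1, (π.symm.injective).comp w.2⟩ with hvdef
    have hvB : ∀ b ∈ B, v.1 b = b := by
      intro b hb
      show π.symm (w.1 b) = b
      rw [← hπD b (Set.mem_union_right _ hb)]
      simp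
    have h1 : E.act o' (fun i => if i = k then v else 1) y = y := hB v hvB
    have hcomb : (fun i : Fin (o'.unop.len + 1) =>
        (if i = k then πM else 1) * (if i = k then v else 1))
        = (fun i => if i = k then w else 1) := by
      funext i
      by_cases hi : i = k
      · simp only [hi, if_pos rfl]
        apply Subtype.ext
        funext n
        show π (π.symm (w.1 n)) = w.1 n
        simp
      · simp [hi]
    have h2 : E.act o' (fun i : Fin (o'.unop.len + 1) =>
          (if i = k then πM else 1) * (if i = k then v else 1)) y
        = E.act o' (fun i => if i = k then πM else 1)
            (E.act o' (fun i => if i = k then v else 1) y) := E.act_mul o' _ _ y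
    rw [hcomb, h1] at h2
    exact h2
  -- `A` is fixed pointwise by `π`, and `π` fixes an infinite set.
  have hAfix : ∀ a ∈ A, π a = a := fun a ha => by
    rw [hπD a (Set.mem_union_left _ ha)]; exact hwA a ha
  have hfixinf : ({n | π n = n} \ A).Infinite := by
    have h1 : {n | π n = n}.Infinite := by
      have h2 := hmoved.infinite_compl
      have h3 : {n | π n ≠ n}ᶜ = {n | π n = n} := by
        ext n; simp [Set.mem_compl_iff]
      rwa [h3] at h2
    exact h1.diff hA
  -- Step 2: an injection `w₁` fixing `A` with range inside `Fix π`.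
  set j := hfixinf.natEmbedding with hjdef
  set w₁ : Mi := ⟨fun n => if n ∈ A then n else (j n : ℕ), by
    intro m n hmn
    by_cases hm : m ∈ A <;> by_cases hn : n ∈ A <;>
      simp only [hm, hn, if_pos, if_neg, if_true, if_false] at hmn
    · exact hmn
    · exact absurd (hmn ▸ hm) (j n).2.2
    · exact absurd (hmn ▸ hn) (j m).2.2
    · exact j.injective (Subtype.ext hmn)⟩ with hw₁def
  have hw₁A : ∀ a ∈ A, w₁.1 a = a := fun a ha => by
    show (if a ∈ A then a else (j a : ℕ)) = a
    rw [if_pos ha]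
  have hπw₁ : ∀ n, π (w₁.1 n) = w₁.1 n := by
    intro n
    show π (if n ∈ A then n else (j n : ℕ)) = (if n ∈ A then n else (j n : ℕ))
    by_cases hn : n ∈ A
    · rw [if_pos hn]; exact hAfix n hn
    · rw [if_neg hn]; exact (j n).2.1
  have hπw : πM * w₁ = w₁ := Subtype.ext (funext fun n => hπw₁ n)
  -- Step 3: `y` is fixed by `w₁` inserted along the whole fiber of `φ k`.
  have step3 : E.act o'
      (fun i => if f.unop.toOrderHom i = f.unop.toOrderHom k then w₁ else 1) y = y := by
    have h1 : E.act o (fun i => if i = f.unop.toOrderHom k then w₁ else 1) x = x :=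
      hx w₁ hw₁A
    have h2 : E.X.map f (E.act o (fun i => if i = f.unop.toOrderHom k then w₁ else 1) x)
        = E.act o' (fun i => if f.unop.toOrderHom i = f.unop.toOrderHom k then w₁ else 1)
            (E.X.map f x) := E.act_map f _ x
    rw [h1] at h2
    exact h2.symm
  -- Step 4: split off the `k`-th coordinate: `y = i_k(w₁) z`.
  set g : Fin (o'.unop.len + 1) → Mi :=
    fun i => if f.unop.toOrderHom i = f.unop.toOrderHom k ∧ i ≠ k then w₁ else 1 with hgdef
  set z := E.act o' g y with hzdef
  have hsplit : (fun i : Fin (o'.unop.len + 1) =>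
      (if i = k then w₁ else 1) * g i)
      = (fun i => if f.unop.toOrderHom i = f.unop.toOrderHom k then w₁ else 1) := by
    funext i
    rw [hgdef]
    by_cases hik : i = k
    · subst hik; simp
    · by_cases hfi : f.unop.toOrderHom i = f.unop.toOrderHom k
      · simp [hik, hfi]
      · simp [hik, hfi]
  have step4 : E.act o' (fun i => if i = k then w₁ else 1) z = y := by
    have h1 : E.act o' (fun i : Fin (o'.unop.len + 1) =>
          (if i = k then w₁ else 1) * g i) y
        = E.act o' (fun i => if i = k then w₁ else 1) (E.act o' g y) := E.act_mul o' _ _ y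
    rw [hsplit, step3] at h1
    rw [hzdef]
    exact h1.symm
  -- Step 5: `i_k(π)` fixes `i_k(w₁) z = y` since `π ∘ w₁ = w₁`.
  have step5 : E.act o' (fun i => if i = k then πM else 1) y = y := by
    have h1 : E.act o' (fun i : Fin (o'.unop.len + 1) =>
          (if i = k then πM else 1) * (if i = k then w₁ else 1)) z
        = E.act o' (fun i => if i = k then πM else 1)
            (E.act o' (fun i => if i = k then w₁ else 1) z) := E.act_mul o' _ _ z
    have hcomb : (fun i : Fin (o'.unop.len + 1) =>
        (if i = k then πM else 1) * (if i = k then w₁ else 1))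
        = (fun i => if i = k then w₁ else 1) := by
      funext i
      by_cases hi : i = k <;> simp [hi, hπw]
    rw [hcomb, step4] at h1
    exact h1.symm
  rw [step1, step5]

theorem ksupp_of_pullback_subset (E : EMSSet) (hE : E.Tame)
    {o o' : SimplexCategoryᵒᵖ} (f : o ⟶ o') (x : E.X.obj o)
    (k : Fin (o'.unop.len + 1)) :
    E.ksupp k (E.X.map f x) ⊆ E.ksupp (f.unop.toOrderHom k) x := by
  intro n hn
  apply Set.mem_sInter.2
  rintro A ⟨hAfin, hAsupp⟩
  exact Set.mem_sInter.1 hn A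
    ⟨hAfin, key_suppOn E f x k A hAfin hAsupp (hE o' (E.X.map f x) k)⟩
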